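/- Let C be an algebraically closed valued field with valuation ring C° (a domain). For any ideal I ⊆ C[x₁^±,…,x_n^±], the intersection I ∩ C°[x₁^±,…,x_n^±] is a finitely generated ideal of the Laurent polynomial ring over C°. -/

import Mathlib

set_option maxHeartbeats 1000000
set_option synthInstance.maxHeartbeats 400000
open MvPolynomial


section ValuationAux
variable {V : Type*} [CommRing V] [IsDomain V] [ValuationRing V]

lemma exists_dvd_all {α : Type*} (t : Finset α) (f : α → V) (ht : t.Nonempty) :
    ∃ a ∈ t, ∀ b ∈ t, f a ∣ f b := by
  classical
  induction t using Finset.induction with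
  | empty => simp at ht
  | @insert a t ha ih =>
    rcases t.eq_empty_or_nonempty with rfl | hne
    · exact ⟨a, by simp, by simp⟩
    · obtain ⟨j, hj, hdvd⟩ := ih hne
      rcases ValuationRing.dvd_total (f a) (f j) with h | h
      · refine ⟨a, Finset.mem_insert_self _ _, ?_⟩
        intro b hb
        rcases Finset.mem_insert.mp hb with rfl | hb
        · exact dvd_rfl
        · exact h.trans (hdvd b hb)
      · refine ⟨j, Finset.mem_insert_of_mem hj, ?_⟩
        intro b hb
        rcases Finset.mem_insert.mp hb with rfl | hb
        · exact h
        · exact hdvd b hb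

lemma free_of_fg_torsionFree {Q : Type*} [AddCommGroup Q] [Module V Q] [Module.Finite V Q]
    (htf : ∀ (c : V) (q : Q), c • q = 0 → c = 0 ∨ q = 0) : Module.Free V Q := by
  classical
  have hex : ∃ n : ℕ, ∃ s : Fin n → Q, Submodule.span V (Set.range s) = ⊤ :=
    Module.Finite.exists_fin
  obtain ⟨s, hs⟩ : ∃ s : Fin (Nat.find hex) → Q, Submodule.span V (Set.range s) = ⊤ :=
    Nat.find_spec hex
  have hli : LinearIndependent V s := by
    by_contra hnot
    obtain ⟨g, hg0, i₀, hi₀⟩ := Fintype.not_linearIndependent_iff.mp hnot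
    obtain ⟨j, -, hj⟩ := exists_dvd_all Finset.univ g ⟨i₀, Finset.mem_univ _⟩
    have hjall : ∀ i, g j ∣ g i := fun i => hj i (Finset.mem_univ _)
    have hgj : g j ≠ 0 := by
      intro h
      apply hi₀
      have := hjall i₀
      rw [h] at this
      exact zero_dvd_iff.mp this
    choose b hb using hjall
    have hsum : g j • (∑ i, b i • s i) = 0 := by
      rw [Finset.smul_sum, ← hg0]
      refine Finset.sum_congr rfl fun i _ => ?_
      rw [smul_smul, ← hb i]
    have hbs : (∑ i, b i • s i) = 0 := by
      rcases htf _ _ hsum with h | h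
      · exact absurd h hgj
      · exact h
    have hbj : b j = 1 := by
      have h1 : g j * 1 = g j * b j := by rw [mul_one, ← hb j]
      exact (mul_left_cancel₀ hgj h1).symm
    have hsj : s j = -∑ i ∈ Finset.univ.erase j, b i • s i := by
      have h2 := Finset.add_sum_erase Finset.univ (fun i => b i • s i) (Finset.mem_univ j)
      simp only [hbs, hbj, one_smul] at h2
      exact eq_neg_of_add_eq_zero_left h2
    obtain ⟨m, hm⟩ : ∃ m, Nat.find hex = m + 1 :=
      ⟨Nat.find hex - 1, (Nat.succ_pred_eq_of_pos i₀.pos).symm⟩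
    -- build smaller spanning family
    have hm' : m < Nat.find hex := by omega
    apply Nat.find_min hex hm'
    set j' : Fin (m + 1) := Fin.cast hm j with hj'
    set t : Fin m → Q := (fun i : Fin (m+1) => s (Fin.cast hm.symm i)) ∘ j'.succAbove with ht
    refine ⟨t, ?_⟩
    rw [eq_top_iff, ← hs, Submodule.span_le]
    rintro x ⟨i, rfl⟩
    have key : ∀ i : Fin (Nat.find hex), i ≠ j → s i ∈ Submodule.span V (Set.range t) := by
      intro i hij
      have hij' : Fin.cast hm i ≠ j' := by
        simp only [hj', ne_eq, Fin.ext_iff] at hij ⊢; exact hij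
      obtain ⟨k, hk⟩ := Fin.exists_succAbove_eq hij'
      refine Submodule.subset_span ⟨k, ?_⟩
      rw [ht]
      simp only [Function.comp_apply, hk]
      exact congrArg s (by ext; simp)
    by_cases hij : i = j
    · subst hij
      rw [hsj]
      refine Submodule.neg_mem _ (Submodule.sum_mem _ ?_)
      intro i hi
      exact Submodule.smul_mem _ _ (key i (Finset.ne_of_mem_erase hi))
    · exact key i hij
  exact Module.Free.of_basis (Module.Basis.mk hli (by rw [hs]))

lemma fg_of_saturated {M : Type*} [AddCommGroup M] [Module V M] [Module.Finite V M]
    (N : Submodule V M) (hsat : ∀ (c : V) (x : M), c • x ∈ N → c ≠ 0 → x ∈ N) : N.FG := by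
  have htf : ∀ (c : V) (q : M ⧸ N), c • q = 0 → c = 0 ∨ q = 0 := by
    intro c q h
    by_cases hc : c = 0
    · exact Or.inl hc
    · right
      obtain ⟨x, rfl⟩ := N.mkQ_surjective q
      rw [← map_smul, Submodule.mkQ_apply, Submodule.Quotient.mk_eq_zero] at h
      rw [Submodule.mkQ_apply, Submodule.Quotient.mk_eq_zero]
      exact hsat c x h hc
  have hfree : Module.Free V (M ⧸ N) := free_of_fg_torsionFree htf
  obtain ⟨g, hg⟩ := Module.projective_lifting_property N.mkQ LinearMap.id N.mkQ_surjective
  have hNr : N = Submodule.map ((LinearMap.id : M →ₗ[V] M) - g ∘ₗ N.mkQ) ⊤ := by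
    ext x
    simp only [Submodule.map_top, LinearMap.mem_range]
    constructor
    · intro hx
      refine ⟨x, ?_⟩
      have : N.mkQ x = 0 := (Submodule.Quotient.mk_eq_zero N).2 hx
      simp [LinearMap.sub_apply, this]
    · rintro ⟨y, rfl⟩
      have : N.mkQ (((LinearMap.id : M →ₗ[V] M) - g ∘ₗ N.mkQ) y) = 0 := by
        have hgy : N.mkQ (g (N.mkQ y)) = N.mkQ y := by
          have := congrArg (fun (h : M ⧸ N →ₗ[V] M ⧸ N) => h (N.mkQ y)) hg
          simpa using this
        simp only [Submodule.mkQ_apply] at hgy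
        simp [LinearMap.sub_apply, hgy]
      rwa [Submodule.mkQ_apply, Submodule.Quotient.mk_eq_zero] at this
  rw [hNr]
  exact Submodule.FG.map _ (Module.Finite.fg_top (R := V) (M := M))

end ValuationAux


section HomogAux
variable {R : Type*} [CommRing R] {σ : Type*}

lemma degree_eq_of_mem_support {f : MvPolynomial σ R} {e : ℕ} (hf : f.IsHomogeneous e)
    {μ : σ →₀ ℕ} (hμ : μ ∈ f.support) : μ.degree = e := by
  by_contra h
  exact (mem_support_iff.mp hμ) (hf.coeff_eq_zero h)

lemma hc_mul_homog {g : MvPolynomial σ R} {e : ℕ} (hg : g.IsHomogeneous e)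
    (c : MvPolynomial σ R) (d : ℕ) :
    homogeneousComponent d (c * g) =
      if e ≤ d then homogeneousComponent (d - e) c * g else 0 := by
  classical
  conv_lhs => rw [← sum_homogeneousComponent c, Finset.sum_mul, map_sum]
  have hterm : ∀ a, homogeneousComponent d (homogeneousComponent a c * g)
      = if d = a + e then homogeneousComponent a c * g else 0 := fun a =>
    homogeneousComponent_of_mem ((mem_homogeneousSubmodule _ _).2
      ((homogeneousComponent_isHomogeneous a c).mul hg))
  simp_rw [hterm]
  by_cases hed : e ≤ d
  · rw [if_pos hed]
    have hiff : ∀ a : ℕ, (d = a + e) = (a = d - e) := fun a => propext (by omega)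
    simp_rw [hiff]
    rw [Finset.sum_ite_eq' (Finset.range (c.totalDegree + 1)) (d - e)
      (fun a => homogeneousComponent a c * g)]
    split
    · rfl
    · next h =>
      rw [homogeneousComponent_eq_zero, zero_mul]
      simp only [Finset.mem_range] at h
      omega
  · rw [if_neg hed]
    exact Finset.sum_eq_zero fun a _ => by rw [if_neg (by omega)]

lemma hc_mem_span {S : Set (MvPolynomial σ R)} (hS : ∀ s ∈ S, ∃ e, s.IsHomogeneous e)
    {f : MvPolynomial σ R} (hf : f ∈ Ideal.span S) (d : ℕ) :
    homogeneousComponent d f ∈ Ideal.span S := by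
  obtain ⟨l, hl, rfl⟩ := Submodule.mem_span_set.mp hf
  rw [Finsupp.sum, map_sum]
  refine Ideal.sum_mem _ fun m hm => ?_
  obtain ⟨e, he⟩ := hS m (hl hm)
  rw [smul_eq_mul, hc_mul_homog he]
  split
  · exact Ideal.mul_mem_left _ _ (Ideal.subset_span (hl hm))
  · exact Ideal.zero_mem _

lemma hc_map {S' : Type*} [CommRing S'] (φ : R →+* S') (f : MvPolynomial σ R) (d : ℕ) :
    homogeneousComponent d (MvPolynomial.map φ f) =
      MvPolynomial.map φ (homogeneousComponent d f) := by
  ext u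
  rw [coeff_homogeneousComponent, coeff_map, coeff_map, coeff_homogeneousComponent]
  split <;> simp

lemma exists_homog_preimage {S' : Type*} [CommRing S'] (φ : R →+* S')
    (hφ : Function.Surjective φ) (Q : MvPolynomial σ S') (e : ℕ) (hQ : Q.IsHomogeneous e) :
    ∃ H : MvPolynomial σ R, H.IsHomogeneous e ∧ MvPolynomial.map φ H = Q := by
  classical
  choose pre hpre using hφ
  refine ⟨∑ μ ∈ Q.support, monomial μ (pre (coeff μ Q)), ?_, ?_⟩
  · exact IsHomogeneous.sum _ _ _ fun μ hμ =>
      isHomogeneous_monomial _ (degree_eq_of_mem_support hQ hμ)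
  · rw [map_sum]
    simp_rw [map_monomial, hpre]
    exact support_sum_monomial_coeff Q

lemma homogeneousSubmodule_fg [Fintype σ] (R : Type*) [CommRing R] (d : ℕ) :
    (homogeneousSubmodule σ R d).FG := by
  classical
  have hfin : ({μ : σ →₀ ℕ | μ.degree = d}).Finite := by
    rw [← Set.finite_coe_iff]
    have : Finite {μ : σ →₀ ℕ // μ.degree = d} := by
      refine Finite.of_injective (fun μ => (fun i => (⟨μ.1 i, ?_⟩ : Fin (d + 1)))) ?_
      · have := Finsupp.le_degree i μ.1
        omega
      · intro μ ν h
        ext i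
        have := congrFun h i
        simpa using congrArg Fin.val (congrFun h i)
    exact this
  have : homogeneousSubmodule σ R d =
      Submodule.span R ((fun μ => monomial μ (1 : R)) '' {μ : σ →₀ ℕ | μ.degree = d}) := by
    apply le_antisymm
    · intro p hp
      rw [← support_sum_monomial_coeff p]
      refine Submodule.sum_mem _ fun μ hμ => ?_
      have : monomial μ (coeff μ p) = (coeff μ p) • monomial μ (1 : R) := by
        rw [smul_monomial, smul_eq_mul, mul_one]
      rw [this]
      exact Submodule.smul_mem _ _ (Submodule.subset_span
        ⟨μ, degree_eq_of_mem_support ((mem_homogeneousSubmodule _ _).1 hp) hμ, rfl⟩)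
    · rw [Submodule.span_le]
      rintro x ⟨μ, hμ, rfl⟩
      exact (mem_homogeneousSubmodule _ _).2 (isHomogeneous_monomial _ hμ)
  rw [this]
  exact Submodule.fg_span (hfin.image _)

end HomogAux

lemma exists_finite_subset_span {R M : Type*} [Ring R] [AddCommGroup M] [Module R M]
    (S : Set M) (p : Submodule R M) (h : Submodule.span R S = p) (hfg : p.FG) :
    ∃ T : Finset M, ↑T ⊆ S ∧ Submodule.span R (T : Set M) = p := by
  classical
  obtain ⟨F, hF⟩ := hfg
  have hmem : ∀ x ∈ F, ∃ T' : Finset M, ↑T' ⊆ S ∧ x ∈ Submodule.span R (T' : Set M) := by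
    intro x hx
    have : x ∈ Submodule.span R S := by
      rw [h, ← hF]; exact Submodule.subset_span hx
    exact Submodule.mem_span_finite_of_mem_span this
  choose T' hT'sub hT'mem using hmem
  refine ⟨F.attach.biUnion (fun x => T' x.1 x.2), ?_, ?_⟩
  · intro y hy
    simp only [Finset.coe_biUnion, Set.mem_iUnion, Finset.mem_coe] at hy
    obtain ⟨x, -, hx2⟩ := hy
    exact hT'sub x.1 x.2 hx2
  · apply le_antisymm
    · rw [Submodule.span_le]
      intro y hy
      simp only [Finset.coe_biUnion, Set.mem_iUnion, Finset.mem_coe] at hy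
      obtain ⟨x, -, hx2⟩ := hy
      rw [← h]
      exact Submodule.subset_span (hT'sub x.1 x.2 hx2)
    · rw [← hF, Submodule.span_le]
      intro x hx
      refine Submodule.span_mono ?_ (hT'mem x hx)
      intro y hy
      simp only [Finset.coe_biUnion, Set.mem_iUnion, Finset.mem_coe]
      exact ⟨⟨x, hx⟩, Finset.mem_attach _ _, hy⟩

theorem core_homog {K : Type*} [Field K] (O : ValuationSubring K) {σ : Type*} [Fintype σ]
    (S : Set (MvPolynomial σ K)) (hS : ∀ s ∈ S, ∃ e, s.IsHomogeneous e) :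
    ((Ideal.span S).comap (MvPolynomial.map (O.subtype : ↥O →+* K))).FG := by
  classical
  set V := ↥O with hV
  set ψ : MvPolynomial σ V →+* MvPolynomial σ K := MvPolynomial.map O.subtype with hψ
  set J : Ideal (MvPolynomial σ V) := (Ideal.span S).comap ψ with hJdef
  show J.FG
  -- homogeneous components stay in J
  have hJcomp : ∀ f ∈ J, ∀ d, homogeneousComponent d f ∈ J := by
    intro f hf d
    rw [hJdef, Ideal.mem_comap, hψ, ← hc_map]
    exact hc_mem_span hS (by rw [hJdef, Ideal.mem_comap] at hf; exact hf) d
  -- J is saturated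
  have hJsat : ∀ (c : V) (f : MvPolynomial σ V), c • f ∈ J → c ≠ 0 → f ∈ J := by
    intro c f hcf hc
    rw [hJdef, Ideal.mem_comap] at hcf ⊢
    have h1 : ψ (c • f) = MvPolynomial.C (c : K) * ψ f := by
      rw [smul_eq_C_mul, map_mul, hψ, map_C]
      rfl
    rw [h1] at hcf
    have hcK : (c : K) ≠ 0 := fun hh => hc (Subtype.coe_injective (by simpa using hh))
    have h2 := (Ideal.span S).mul_mem_left (MvPolynomial.C ((c : K)⁻¹)) hcf
    rwa [← mul_assoc, ← map_mul, inv_mul_cancel₀ hcK, map_one, one_mul] at h2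
  -- residue field
  set red : MvPolynomial σ V →+* MvPolynomial σ (IsLocalRing.ResidueField V) :=
    MvPolynomial.map (IsLocalRing.residue V) with hred
  have hredsurj : Function.Surjective red :=
    MvPolynomial.map_surjective _ IsLocalRing.residue_surjective
  set S₀ : Set (MvPolynomial σ (IsLocalRing.ResidueField V)) :=
    red '' {F | F ∈ J ∧ ∃ d, F.IsHomogeneous d} with hS₀
  have hspan₀ : Ideal.span S₀ = J.map red := by
    apply le_antisymm
    · rw [Ideal.span_le]
      rintro x ⟨F, ⟨hFJ, -⟩, rfl⟩
      exact Ideal.mem_map_of_mem _ hFJ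
    · rw [Ideal.map, Ideal.span_le]
      rintro x ⟨F, hFJ, rfl⟩
      rw [← sum_homogeneousComponent F, map_sum]
      refine Submodule.sum_mem _ fun i _ => ?_
      exact Ideal.subset_span
        ⟨homogeneousComponent i F, ⟨hJcomp F hFJ i, i, homogeneousComponent_isHomogeneous i F⟩,
          rfl⟩
  obtain ⟨T, hTS₀, hTspan⟩ := exists_finite_subset_span S₀ (J.map red) hspan₀
    (IsNoetherian.noetherian _)
  -- lift generators
  have hlift : ∀ t ∈ T, ∃ F : MvPolynomial σ V,
      F ∈ J ∧ (∃ d, F.IsHomogeneous d ∧ red F = t) := by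
    intro t ht
    obtain ⟨F, ⟨h1, d, h2⟩, h3⟩ := hTS₀ ht
    exact ⟨F, h1, d, h2, h3⟩
  choose G hGJ hGd using hlift
  choose dg hGhom hGred using hGd
  set 𝒢 : Finset (MvPolynomial σ V) := T.attach.image (fun t => G t.1 t.2) with h𝒢
  set P : Ideal (MvPolynomial σ V) := Ideal.span (𝒢 : Set (MvPolynomial σ V)) with hP
  have hPJ : P ≤ J := by
    rw [hP, Ideal.span_le]
    intro x hx
    simp only [h𝒢, Finset.coe_image, Set.mem_image, Finset.mem_coe] at hx
    obtain ⟨t, -, rfl⟩ := hx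
    exact hGJ t.1 t.2
  -- the degree-d layers
  set Nd : ℕ → Submodule V (MvPolynomial σ V) := fun d =>
    (Submodule.restrictScalars V (J : Submodule (MvPolynomial σ V) (MvPolynomial σ V))) ⊓
      homogeneousSubmodule σ V d with hNd
  -- finite generation of each layer
  have hNdfg : ∀ d, (Nd d).FG := by
    intro d
    haveI hMfin : Module.Finite V ↥(homogeneousSubmodule σ V d) :=
      Module.Finite.iff_fg.mpr (homogeneousSubmodule_fg V d)
    set N' : Submodule V ↥(homogeneousSubmodule σ V d) :=
      Submodule.comap (homogeneousSubmodule σ V d).subtype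
        (Submodule.restrictScalars V (J : Submodule (MvPolynomial σ V) (MvPolynomial σ V)))
      with hN'
    have hsat : ∀ (c : V) (x : ↥(homogeneousSubmodule σ V d)), c • x ∈ N' → c ≠ 0 → x ∈ N' := by
      intro c x hcx hc
      rw [hN', Submodule.mem_comap] at hcx ⊢
      exact hJsat c x.1 hcx hc
    have hfgN' : N'.FG := fg_of_saturated (V := V) (M := ↥(homogeneousSubmodule σ V d)) N' hsat
    have h2 : (Submodule.map (homogeneousSubmodule σ V d).subtype N').FG :=
      Submodule.FG.map _ hfgN'
    rwa [hN', Submodule.map_comap_subtype, inf_comm] at h2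
  -- division step
  have hdiv : ∀ d, Nd d ≤ (Submodule.restrictScalars V
      (P : Submodule (MvPolynomial σ V) (MvPolynomial σ V))) ⊔
      (IsLocalRing.maximalIdeal V) • (Nd d) := by
    intro d F hF
    obtain ⟨hFJ, hFhom⟩ := hF
    have hFJ' : F ∈ J := hFJ
    have hFh : F.IsHomogeneous d := hFhom
    -- representation of red F
    have hredF : red F ∈ Submodule.span (MvPolynomial σ (IsLocalRing.ResidueField V))
        (T : Set (MvPolynomial σ (IsLocalRing.ResidueField V))) := by
      exact (SetLike.ext_iff.mp hTspan (red F)).mpr (Ideal.mem_map_of_mem _ hFJ')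
    obtain ⟨l, hlsupp, hlsum⟩ := Submodule.mem_span_set.mp hredF
    -- summands, with homogeneous lifts
    have hW : ∀ m ∈ l.support, ∃ W : MvPolynomial σ V,
        W ∈ P ∧ W.IsHomogeneous d ∧ red W = homogeneousComponent d (l m * m) := by
      intro m hm
      have hmT : m ∈ T := hlsupp hm
      have hmhom : m.IsHomogeneous (dg m hmT) := by
        have hmap := (hGhom m hmT).map (IsLocalRing.residue V)
        rwa [← hred, hGred m hmT] at hmap
      by_cases hle : dg m hmT ≤ d
      · obtain ⟨H, hHhom, hHred⟩ := exists_homog_preimage (IsLocalRing.residue V)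
          IsLocalRing.residue_surjective (homogeneousComponent (d - dg m hmT) (l m))
          (d - dg m hmT) (homogeneousComponent_isHomogeneous _ _)
        refine ⟨H * G m hmT, ?_, ?_, ?_⟩
        · refine Ideal.mul_mem_left _ _ (Ideal.subset_span ?_)
          simp only [h𝒢, Finset.coe_image, Set.mem_image, Finset.mem_coe]
          exact ⟨⟨m, hmT⟩, Finset.mem_attach _ _, rfl⟩
        · have := hHhom.mul (hGhom m hmT)
          rwa [Nat.sub_add_cancel hle] at this
        · rw [hred, map_mul]
          rw [← hred, hHred, hGred m hmT, hc_mul_homog hmhom, if_pos hle]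
      · refine ⟨0, Ideal.zero_mem _, isHomogeneous_zero _ _ _, ?_⟩
        rw [map_zero, hc_mul_homog hmhom, if_neg hle]
    choose W hWP hWhom hWred using hW
    set F₁ : MvPolynomial σ V := F - ∑ m ∈ l.support.attach, W m.1 m.2 with hF₁
    have hF₁J : F₁ ∈ J := by
      refine Ideal.sub_mem _ hFJ' (hPJ (Submodule.sum_mem _ fun m _ => hWP m.1 m.2))
    have hF₁hom : F₁.IsHomogeneous d := by
      refine hFh.sub (IsHomogeneous.sum _ _ _ fun m _ => hWhom m.1 m.2)
    have hredF₁ : red F₁ = 0 := by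
      rw [hF₁, map_sub, map_sum]
      have h1 : ∑ m ∈ l.support.attach, red (W m.1 m.2)
          = ∑ m ∈ l.support.attach, homogeneousComponent d (l m.1 * m.1) :=
        Finset.sum_congr rfl fun m _ => hWred m.1 m.2
      have h2 : ∑ m ∈ l.support.attach, homogeneousComponent d (l m.1 * m.1)
          = ∑ m ∈ l.support, homogeneousComponent d (l m * m) :=
        Finset.sum_attach l.support (fun m => homogeneousComponent d (l m * m))
      have h3 : ∑ m ∈ l.support, homogeneousComponent d (l m * m)
          = homogeneousComponent d (red F) := by
        rw [← hlsum, Finsupp.sum, map_sum]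
        exact Finset.sum_congr rfl fun m _ => by rw [smul_eq_mul]
      have h4 : homogeneousComponent d (red F) = red F := by
        rw [homogeneousComponent_of_mem ((mem_homogeneousSubmodule _ _).2 (hFh.map _)),
          if_pos rfl]
      rw [h1, h2, h3, h4, sub_self]
    -- all coefficients of F₁ are in the maximal ideal
    have hcoeff : ∀ μ, coeff μ F₁ ∈ IsLocalRing.maximalIdeal V := by
      intro μ
      have : coeff μ (red F₁) = 0 := by rw [hredF₁, coeff_zero]
      rw [hred, coeff_map] at this
      exact (Ideal.Quotient.eq_zero_iff_mem).1 this
    by_cases hF₁0 : F₁ = 0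
    · have hFeq : F = ∑ m ∈ l.support.attach, W m.1 m.2 := by
        have h0 : F - ∑ m ∈ l.support.attach, W m.1 m.2 = 0 := by rw [← hF₁]; exact hF₁0
        have := sub_eq_zero.mp h0
        exact this
      rw [hFeq]
      exact Submodule.mem_sup_left (Submodule.sum_mem _ fun m _ => hWP m.1 m.2)
    · -- factor out a coefficient
      obtain ⟨μ₀, hμ₀s, hμ₀⟩ := exists_dvd_all F₁.support (fun μ => coeff μ F₁)
        (MvPolynomial.support_nonempty.mpr hF₁0)
      set c : V := coeff μ₀ F₁ with hc
      have hc0 : c ≠ 0 := mem_support_iff.mp hμ₀s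
      have hcm : c ∈ IsLocalRing.maximalIdeal V := hcoeff μ₀
      have hball : ∀ μ, ∃ b : V, coeff μ F₁ = c * b := by
        intro μ
        by_cases hμ : μ ∈ F₁.support
        · exact hμ₀ μ hμ
        · exact ⟨0, by rw [mul_zero]; exact notMem_support_iff.mp hμ⟩
      choose b hb using hball
      set F₂ : MvPolynomial σ V := ∑ μ ∈ F₁.support, monomial μ (b μ) with hF₂
      have hcF₂ : c • F₂ = F₁ := by
        rw [hF₂, Finset.smul_sum]
        have : ∀ μ ∈ F₁.support, c • monomial μ (b μ) = monomial μ (coeff μ F₁) := by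
          intro μ _
          rw [smul_monomial, smul_eq_mul, ← hb μ]
        rw [Finset.sum_congr rfl this, support_sum_monomial_coeff]
      have hF₂J : F₂ ∈ J := hJsat c F₂ (by rw [hcF₂]; exact hF₁J) hc0
      have hF₂hom : F₂.IsHomogeneous d := by
        refine IsHomogeneous.sum _ _ _ fun μ hμ => isHomogeneous_monomial _ ?_
        exact degree_eq_of_mem_support hF₁hom hμ
      have hF₂Nd : F₂ ∈ Nd d := ⟨hF₂J, (mem_homogeneousSubmodule _ _).2 hF₂hom⟩
      have hsplit : F = (∑ m ∈ l.support.attach, W m.1 m.2) + c • F₂ := by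
        rw [hcF₂, hF₁]; ring
      rw [hsplit]
      refine Submodule.add_mem_sup ?_ (Submodule.smul_mem_smul hcm hF₂Nd)
      exact Submodule.sum_mem _ fun m _ => hWP m.1 m.2
  -- Nakayama
  have hNdP : ∀ d, Nd d ≤ Submodule.restrictScalars V
      (P : Submodule (MvPolynomial σ V) (MvPolynomial σ V)) := by
    intro d
    refine Submodule.le_of_le_smul_of_le_jacobson_bot (hNdfg d) ?_ (hdiv d)
    rw [IsLocalRing.jacobson_eq_maximalIdeal ⊥ bot_ne_top]
  -- conclude
  have hJP : J = P := by
    refine le_antisymm ?_ hPJ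
    intro f hf
    rw [← sum_homogeneousComponent f]
    refine Submodule.sum_mem _ fun i _ => ?_
    exact hNdP i ⟨hJcomp f hf i, (mem_homogeneousSubmodule _ _).2
      (homogeneousComponent_isHomogeneous i f)⟩
  rw [hJP, hP]
  exact ⟨𝒢, rfl⟩

section Homogenization
variable {R : Type*} [CommRing R] {σ : Type*}

lemma Finsupp.degree_add' (f g : σ →₀ ℕ) : (f + g).degree = f.degree + g.degree := by
  simp only [Finsupp.degree_eq_weight_one, map_add]

noncomputable def homExt (D : ℕ) (μ : σ →₀ ℕ) : Option σ →₀ ℕ :=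
  Finsupp.mapDomain some μ + Finsupp.single none (D - μ.degree)

lemma degree_mapDomain_some (μ : σ →₀ ℕ) : (Finsupp.mapDomain some μ).degree = μ.degree := by
  show (Finsupp.mapDomain some μ).sum (fun _ e => e) = μ.sum (fun _ e => e)
  exact Finsupp.sum_mapDomain_index_inj (Option.some_injective σ)

lemma degree_single_none (c : ℕ) : (Finsupp.single (none : Option σ) c).degree = c := by
  classical
  by_cases hc : c = 0
  · subst hc; simp [Finsupp.degree]
  · exact Finsupp.degree_single _ _

lemma homExt_degree {D : ℕ} {μ : σ →₀ ℕ} (h : μ.degree ≤ D) : (homExt D μ).degree = D := by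
  rw [homExt, Finsupp.degree_add', degree_mapDomain_some, degree_single_none]
  omega

noncomputable def homog (D : ℕ) (F : MvPolynomial σ R) : MvPolynomial (Option σ) R :=
  ∑ μ ∈ F.support, monomial (homExt D μ) (coeff μ F)

lemma homog_isHomogeneous (D : ℕ) (F : MvPolynomial σ R) (h : F.totalDegree ≤ D) :
    (homog D F).IsHomogeneous D := by
  refine IsHomogeneous.sum _ _ _ fun μ hμ => isHomogeneous_monomial _ (homExt_degree ?_)
  exact le_trans (Finset.le_sup hμ) h

lemma aeval_homExt_monomial (D : ℕ) (μ : σ →₀ ℕ) (a : R) :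
    aeval (fun o : Option σ => o.elim 1 X) (monomial (homExt D μ) a) = monomial μ a := by
  classical
  rw [aeval_monomial, homExt]
  rw [Finsupp.prod_add_index (by intro i _; exact pow_zero _)
    (by intro i _ b₁ b₂; exact pow_add _ _ _)]
  rw [Finsupp.prod_single_index (a := (none : Option σ)) (b := D - μ.degree)
    (h := fun (i : Option σ) (k : ℕ) => (Option.elim i (1 : MvPolynomial σ R) X) ^ k) (pow_zero _)]
  have h1 : (Finsupp.mapDomain some μ).prod
        (fun (i : Option σ) (k : ℕ) => (Option.elim i (1 : MvPolynomial σ R) X) ^ k)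
      = μ.prod fun a b => (Option.elim (some a) (1 : MvPolynomial σ R) X) ^ b :=
    Finsupp.prod_mapDomain_index_inj (Option.some_injective σ)
  rw [h1, monomial_eq]
  simp [algebraMap_eq]

lemma aeval_homog (D : ℕ) (F : MvPolynomial σ R) :
    aeval (fun o : Option σ => o.elim 1 X) (homog D F) = F := by
  rw [homog, map_sum]
  simp_rw [aeval_homExt_monomial]
  exact support_sum_monomial_coeff F

lemma homog_map {S' : Type*} [CommRing S'] (ψ : R →+* S') (hinj : Function.Injective ψ)
    (F : MvPolynomial σ R) (D : ℕ) :
    MvPolynomial.map ψ (homog D F) = homog D (MvPolynomial.map ψ F) := by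
  rw [homog, map_sum, homog, support_map_of_injective F hinj]
  refine Finset.sum_congr rfl fun μ _ => ?_
  rw [map_monomial, coeff_map]

lemma totalDegree_map_of_injective {S' : Type*} [CommRing S'] (ψ : R →+* S')
    (hinj : Function.Injective ψ) (F : MvPolynomial σ R) :
    (MvPolynomial.map ψ F).totalDegree = F.totalDegree := by
  rw [totalDegree, totalDegree, support_map_of_injective F hinj]

end Homogenization

theorem contraction_fg {K : Type*} [Field K] (O : ValuationSubring K) {σ : Type*} [Fintype σ]
    (I : Ideal (MvPolynomial σ K)) :
    (I.comap (MvPolynomial.map (O.subtype : ↥O →+* K))).FG := by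
  classical
  have hinj : Function.Injective (O.subtype : ↥O →+* K) := Subtype.coe_injective
  set S : Set (MvPolynomial (Option σ) K) :=
    (fun f : MvPolynomial σ K => homog f.totalDegree f) '' (I : Set (MvPolynomial σ K)) with hSdef
  have hS : ∀ s ∈ S, ∃ e, s.IsHomogeneous e := by
    rintro s ⟨f, hf, rfl⟩
    exact ⟨f.totalDegree, homog_isHomogeneous _ _ le_rfl⟩
  have hcore := core_homog O S hS
  set φK : MvPolynomial (Option σ) K →+* MvPolynomial σ K :=
    (aeval (fun o : Option σ => o.elim 1 X) :
      MvPolynomial (Option σ) K →ₐ[K] MvPolynomial σ K).toRingHom with hφK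
  set φV : MvPolynomial (Option σ) ↥O →+* MvPolynomial σ ↥O :=
    (aeval (fun o : Option σ => o.elim 1 X) :
      MvPolynomial (Option σ) ↥O →ₐ[↥O] MvPolynomial σ ↥O).toRingHom with hφV
  have hcomm : (MvPolynomial.map (O.subtype : ↥O →+* K)).comp φV
      = φK.comp (MvPolynomial.map (O.subtype : ↥O →+* K)) := by
    apply MvPolynomial.ringHom_ext
    · intro r
      simp [hφK, hφV]
    · intro i
      cases i <;> simp [hφK, hφV]
  have hφKS : ∀ s ∈ S, φK s ∈ I := by
    rintro s ⟨f, hf, rfl⟩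
    have : φK (homog f.totalDegree f) = f := aeval_homog _ _
    rw [this]
    exact hf
  have key : I.comap (MvPolynomial.map (O.subtype : ↥O →+* K))
      = Ideal.map φV ((Ideal.span S).comap (MvPolynomial.map (O.subtype : ↥O →+* K))) := by
    apply le_antisymm
    · intro f hf
      rw [Ideal.mem_comap] at hf
      set D := f.totalDegree with hD
      have hmem : homog D f ∈ (Ideal.span S).comap
          (MvPolynomial.map (O.subtype : ↥O →+* K)) := by
        rw [Ideal.mem_comap, homog_map _ hinj]
        refine Ideal.subset_span ⟨MvPolynomial.map (O.subtype : ↥O →+* K) f, hf, ?_⟩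
        show homog ((MvPolynomial.map (O.subtype : ↥O →+* K)) f).totalDegree
          ((MvPolynomial.map (O.subtype : ↥O →+* K)) f) = _
        rw [totalDegree_map_of_injective _ hinj]
      have := Ideal.mem_map_of_mem φV hmem
      rwa [show φV (homog D f) = f from aeval_homog _ _] at this
    · rw [Ideal.map_le_iff_le_comap]
      intro G hG
      rw [Ideal.mem_comap] at hG ⊢
      rw [Ideal.mem_comap]
      have : (MvPolynomial.map (O.subtype : ↥O →+* K)) (φV G)
          = φK ((MvPolynomial.map (O.subtype : ↥O →+* K)) G) := by
        have := congrArg (fun (h : MvPolynomial (Option σ) ↥O →+* MvPolynomial σ K) => h G) hcomm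
        simpa using this
      rw [this]
      have hspan : Ideal.span S ≤ I.comap φK := by
        rw [Ideal.span_le]
        intro s hs
        rw [SetLike.mem_coe, Ideal.mem_comap]
        exact hφKS s hs
      exact hspan hG
  rw [key]
  exact Ideal.FG.map hcore _

-- product of singles
lemma prod_single_one {k : Type*} {G : Type*} [CommSemiring k] [AddCommMonoid G]
    {ι : Type*} (s : Finset ι) (h : ι → G) :
    ∏ i ∈ s, AddMonoidAlgebra.single (h i) (1 : k) = AddMonoidAlgebra.single (∑ i ∈ s, h i) 1 := by
  classical
  induction s using Finset.induction with
  | empty => simp [AddMonoidAlgebra.one_def]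
  | @insert a t ha ih =>
    rw [Finset.prod_insert ha, Finset.sum_insert ha, ih, AddMonoidAlgebra.single_mul_single,
      mul_one]

section Laurent
variable {K : Type*} [Field K] (O : ValuationSubring K) {n : ℕ}

noncomputable abbrev vA : Fin n ⊕ Fin n → AddMonoidAlgebra ↥O (Fin n →₀ ℤ) :=
  Sum.elim (fun i => AddMonoidAlgebra.single (Finsupp.single i 1) 1)
    (fun i => AddMonoidAlgebra.single (Finsupp.single i (-1)) 1)

noncomputable abbrev vB : Fin n ⊕ Fin n → AddMonoidAlgebra K (Fin n →₀ ℤ) :=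
  Sum.elim (fun i => AddMonoidAlgebra.single (Finsupp.single i 1) 1)
    (fun i => AddMonoidAlgebra.single (Finsupp.single i (-1)) 1)

noncomputable def piV : MvPolynomial (Fin n ⊕ Fin n) ↥O →ₐ[↥O] AddMonoidAlgebra ↥O (Fin n →₀ ℤ) :=
  aeval (vA O)

noncomputable def piK : MvPolynomial (Fin n ⊕ Fin n) K →ₐ[K] AddMonoidAlgebra K (Fin n →₀ ℤ) :=
  aeval vB

lemma single_mem_range (g : Fin n →₀ ℤ) :
    AddMonoidAlgebra.single g (1 : ↥O) ∈ (piV O (n := n)).range := by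
  classical
  have hfac : ∀ i ∈ g.support,
      (piV O) ((if 0 ≤ g i then X (Sum.inl i) else X (Sum.inr i)) ^ (g i).natAbs)
        = AddMonoidAlgebra.single (Finsupp.single i (g i)) (1 : ↥O) := by
    intro i _
    by_cases hz : 0 ≤ g i
    · rw [if_pos hz, map_pow]
      rw [show (piV O) (X (Sum.inl i)) = AddMonoidAlgebra.single (Finsupp.single i (1 : ℤ)) 1 from
        aeval_X _ _]
      rw [AddMonoidAlgebra.single_pow, one_pow]
      have harg : (g i).natAbs • Finsupp.single i (1 : ℤ) = Finsupp.single i (g i) := by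
        rw [Finsupp.smul_single, nsmul_eq_mul, mul_one, Int.natAbs_of_nonneg hz]
      rw [harg]
    · rw [if_neg hz, map_pow]
      rw [show (piV O) (X (Sum.inr i)) = AddMonoidAlgebra.single (Finsupp.single i (-1 : ℤ)) 1 from
        aeval_X _ _]
      rw [AddMonoidAlgebra.single_pow, one_pow]
      have harg : (g i).natAbs • Finsupp.single i (-1 : ℤ) = Finsupp.single i (g i) := by
        rw [Finsupp.smul_single, nsmul_eq_mul, Int.ofNat_natAbs_of_nonpos (le_of_not_ge hz),
          neg_mul_neg, mul_one]
      rw [harg]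
  refine ⟨g.prod fun i z => (if 0 ≤ z then X (Sum.inl i) else X (Sum.inr i)) ^ z.natAbs, ?_⟩
  rw [map_finsuppProd, Finsupp.prod]
  simp only [AlgHom.toRingHom_eq_coe, RingHom.coe_coe]
  rw [Finset.prod_congr rfl hfac]
  rw [prod_single_one]
  congr 1
  have := Finsupp.sum_single g
  rwa [Finsupp.sum] at this

lemma piV_surjective : Function.Surjective (piV O (n := n)) := by
  classical
  intro x
  have hx : x ∈ (piV O (n := n)).range := by
    have hdec : x = ∑ g ∈ x.coeff.support, AddMonoidAlgebra.single g (x.coeff g) := by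
      have := AddMonoidAlgebra.sum_coeff_single x
      rw [Finsupp.sum] at this
      exact this.symm
    rw [hdec]
    refine Subalgebra.sum_mem _ fun g _ => ?_
    have h1 : AddMonoidAlgebra.single g (x.coeff g) = (x.coeff g) • AddMonoidAlgebra.single g (1 : ↥O) := by
      rw [AddMonoidAlgebra.smul_single', mul_one]
    rw [h1]
    exact Subalgebra.smul_mem _ (single_mem_range O g) _
  exact hx

lemma square_comm :
    ((AddMonoidAlgebra.lift ↥O (AddMonoidAlgebra K (Fin n →₀ ℤ)) (Fin n →₀ ℤ)
        (AddMonoidAlgebra.of K (Fin n →₀ ℤ))).toRingHom).comp (piV O (n := n)).toRingHom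
      = (piK (K := K) (n := n)).toRingHom.comp
          (MvPolynomial.map (O.subtype : ↥O →+* K)) := by
  apply MvPolynomial.ringHom_ext
  · intro r
    simp only [RingHom.comp_apply]
    rw [show ((piV O (n := n)).toRingHom) (C r) = algebraMap ↥O _ r from (piV O).commutes r]
    rw [AlgHom.toRingHom_eq_coe, RingHom.coe_coe, AlgHom.commutes]
    rw [MvPolynomial.map_C]
    rw [show ((piK (K := K) (n := n)).toRingHom) (C ((O.subtype) r))
      = algebraMap K _ ((O.subtype) r) from (piK (K := K)).commutes _]
    rw [IsScalarTower.algebraMap_apply ↥O K (AddMonoidAlgebra K (Fin n →₀ ℤ))]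
    rfl
  · intro s
    simp only [RingHom.comp_apply]
    rw [MvPolynomial.map_X]
    rw [show ((piV O (n := n)).toRingHom) (X s) = vA O s from aeval_X _ _]
    rw [show ((piK (K := K) (n := n)).toRingHom) (X s) = vB s from aeval_X _ _]
    cases s with
    | inl i =>
      simp only [Sum.elim_inl, AlgHom.toRingHom_eq_coe, RingHom.coe_coe]
      rw [AddMonoidAlgebra.lift_single, AddMonoidAlgebra.of_apply, one_smul]
      rfl
    | inr i =>
      simp only [Sum.elim_inr, AlgHom.toRingHom_eq_coe, RingHom.coe_coe]
      rw [AddMonoidAlgebra.lift_single, AddMonoidAlgebra.of_apply, one_smul]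
      rfl

end Laurent

/-- Let `C` be an algebraically closed valued field with valuation ring
`C°` (a `ValuationSubring`, in particular a domain). For any ideal `I` of the Laurent
polynomial ring `C[x₁^±,…,x_n^±]` (modelled as the monoid algebra of `Fin n →₀ ℤ`), the
contraction `I ∩ C°[x₁^±,…,x_n^±]` — the preimage of `I` under the coefficientwise
inclusion `C°[x₁^±,…,x_n^±] → C[x₁^±,…,x_n^±]` — is a finitely generated ideal. -/
theorem stmt18 {K : Type*} [Field K] [IsAlgClosed K] (O : ValuationSubring K) {n : ℕ}
    (I : Ideal (AddMonoidAlgebra K (Fin n →₀ ℤ))) :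
    (I.comap
      ((AddMonoidAlgebra.lift ↥O (AddMonoidAlgebra K (Fin n →₀ ℤ)) (Fin n →₀ ℤ)
          (AddMonoidAlgebra.of K (Fin n →₀ ℤ))).toRingHom)).FG := by
  classical
  set ψ := (AddMonoidAlgebra.lift ↥O (AddMonoidAlgebra K (Fin n →₀ ℤ)) (Fin n →₀ ℤ)
      (AddMonoidAlgebra.of K (Fin n →₀ ℤ))).toRingHom with hψ
  set J := I.comap ψ with hJ
  have h1 : J.comap (piV O (n := n)).toRingHom
      = (I.comap (piK (K := K) (n := n)).toRingHom).comap
          (MvPolynomial.map (O.subtype : ↥O →+* K)) := by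
    rw [hJ, Ideal.comap_comap, Ideal.comap_comap, square_comm]
  have h2 : (J.comap (piV O (n := n)).toRingHom).FG := by
    rw [h1]
    exact contraction_fg O _
  have h3 : J = Ideal.map (piV O (n := n)).toRingHom (J.comap (piV O (n := n)).toRingHom) :=
    (Ideal.map_comap_of_surjective _ (piV_surjective O) J).symm
  rw [h3]
  exact Ideal.FG.map h2 _
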